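/- arXiv:1206.0156 — 3 statements merged into one kernel-verified Lean document; each statement's English description precedes it below -/
import Mathlib

section
/- For every positive integer N and every a ∈ A_N (a ≤ N coprime to r_1,...,r_m), one has a ≤ N·2^{-(|B_N(a)|^{1/m} - 1)}. -/
/-- For `a ∈ A_N` (i.e. `a ≤ N` coprime to all the `r i`),
`a ≤ N * 2^{-(|B_N(a)|^{1/m} - 1)}`. -/
theorem stmt3 (m : ℕ) (hm : 0 < m) (r : Fin m → ℕ) (hrprime : ∀ i, (r i).Prime)
    (hrinj : Function.Injective r)
    (a N : ℕ) (ha : 0 < a) (haN : a ≤ N) (hcop : ∀ i, Nat.Coprime a (r i)) :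
    (a : ℝ) ≤ (N : ℝ) *
      (2 : ℝ) ^ (-(((({b : ℕ | b ≤ N ∧ ∃ d : Fin m → ℕ, b = a * ∏ i, r i ^ d i} : Set ℕ).ncard : ℝ)
        ^ ((1 : ℝ) / m) - 1))) := by
  set B : Set ℕ := {b : ℕ | b ≤ N ∧ ∃ d : Fin m → ℕ, b = a * ∏ i, r i ^ d i} with hB
  set L : ℕ := Nat.log 2 (N / a) with hL
  have hNa : 1 ≤ N / a := (Nat.one_le_div_iff ha).2 haN
  have hsub : B ⊆ ((Fintype.piFinset fun _ : Fin m => Finset.range (L + 1)).image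
      (fun d => a * ∏ i, r i ^ d i) : Finset ℕ) := by
    rintro b ⟨hbN, d, rfl⟩
    simp only [Finset.coe_image, Set.mem_image, Finset.mem_coe, Fintype.mem_piFinset,
      Finset.mem_range]
    refine ⟨d, fun i => ?_, rfl⟩
    have h1 : r i ^ d i ≤ ∏ j, r j ^ d j :=
      Finset.single_le_prod' (fun j _ => Nat.one_le_pow _ _ (hrprime j).pos) (Finset.mem_univ i)
    have h2 : 2 ^ d i ≤ r i ^ d i := Nat.pow_le_pow_left (hrprime i).two_le _
    have h3 : a * 2 ^ d i ≤ N := le_trans (Nat.mul_le_mul_left a (le_trans h2 h1)) hbN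
    have h4 : 2 ^ d i ≤ N / a := (Nat.le_div_iff_mul_le ha).2 (by rw [mul_comm]; exact h3)
    have := (Nat.le_log_iff_pow_le (by norm_num) (by omega)).2 h4
    omega
  have hKle : B.ncard ≤ (L + 1) ^ m := by
    have h1 := Set.ncard_le_ncard hsub (Finset.finite_toSet _)
    rw [Set.ncard_coe_finset] at h1
    calc B.ncard ≤ _ := h1
      _ ≤ (Fintype.piFinset fun _ : Fin m => Finset.range (L + 1)).card :=
          Finset.card_image_le
      _ = (L + 1) ^ m := by simp
  have h2L : a * 2 ^ L ≤ N := by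
    have h1 : 2 ^ L ≤ N / a := Nat.pow_log_le_self 2 (by omega)
    calc a * 2 ^ L ≤ a * (N / a) := Nat.mul_le_mul_left _ h1
      _ ≤ N := Nat.mul_div_le N a
  have hK0 : (0 : ℝ) ≤ (B.ncard : ℝ) := Nat.cast_nonneg _
  have hroot : (B.ncard : ℝ) ^ ((1 : ℝ) / m) ≤ (L : ℝ) + 1 := by
    have h1 : (B.ncard : ℝ) ≤ ((L : ℝ) + 1) ^ (m : ℕ) := by exact_mod_cast hKle
    have h2 := Real.rpow_le_rpow hK0 h1 (by positivity : (0:ℝ) ≤ (1:ℝ)/m)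
    calc (B.ncard : ℝ) ^ ((1 : ℝ) / m) ≤ (((L : ℝ) + 1) ^ (m : ℕ)) ^ ((1 : ℝ) / m) := h2
      _ = (L : ℝ) + 1 := by
        rw [← Real.rpow_natCast ((L : ℝ) + 1) m, ← Real.rpow_mul (by positivity),
          mul_one_div, div_self (by exact_mod_cast hm.ne' : (m : ℝ) ≠ 0), Real.rpow_one]
  rw [Real.rpow_neg (by norm_num), ← div_eq_mul_inv,
    le_div_iff₀ (Real.rpow_pos_of_pos (by norm_num) _)]
  calc (a : ℝ) * 2 ^ ((B.ncard : ℝ) ^ ((1 : ℝ) / m) - 1)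
      ≤ (a : ℝ) * 2 ^ (L : ℝ) := by
        gcongr
        · norm_num
        · linarith
    _ = (a : ℝ) * 2 ^ (L : ℕ) := by rw [Real.rpow_natCast]
    _ ≤ N := by exact_mod_cast h2L
end

section
/- For all a ≤ b ≤ c integers and any n ≥ 1, the density of A^{(l)} is controlled: |A_N^{(l)}| ≤ N·2^{-(l^{1/m} - 1)}, where A_N^{(l)} = { a ∈ A_N : |B_N(a)| = l }. -/
/-- Bound on the number of `a ∈ A_N` with `|B_N(a)| = l`:
`|A_N^{(l)}| ≤ N * 2^{-(l^{1/m} - 1)}`. -/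
theorem stmt7 (m : ℕ) (hm : 0 < m) (r : Fin m → ℕ) (hrprime : ∀ i, (r i).Prime)
    (hrinj : Function.Injective r) (N l : ℕ) (hl : 1 ≤ l) :
    ((({a : ℕ | 1 ≤ a ∧ a ≤ N ∧ (∀ i, Nat.Coprime a (r i)) ∧
        ({b : ℕ | b ≤ N ∧ ∃ d : Fin m → ℕ, b = a * ∏ i, r i ^ d i} : Set ℕ).ncard = l} :
          Set ℕ).ncard : ℝ))
      ≤ (N : ℝ) * (2 : ℝ) ^ (-(((l : ℝ) ^ ((1 : ℝ) / m)) - 1)) := by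
  set x : ℝ := (l : ℝ) ^ ((1 : ℝ) / m) with hxdef
  have hx1 : (1 : ℝ) ≤ x := by
    rw [hxdef]
    apply Real.one_le_rpow (by exact_mod_cast hl)
    positivity
  set u : ℕ := ⌈x⌉₊ - 1 with hudef
  have hceil1 : 1 ≤ ⌈x⌉₊ := Nat.one_le_ceil_iff.mpr (lt_of_lt_of_le one_pos hx1)
  have hucast : (u : ℝ) = (⌈x⌉₊ : ℝ) - 1 := by
    rw [hudef]; push_cast [hceil1]; ring
  have hux : (u : ℝ) < x := by
    rw [hucast]
    have := Nat.ceil_lt_add_one (le_trans zero_le_one hx1)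
    linarith
  have huge : x - 1 ≤ (u : ℝ) := by
    rw [hucast]
    have := Nat.le_ceil x
    linarith
  -- u^m < l
  have hul : u ^ m < l := by
    have h1 : ((u : ℝ)) ^ m < x ^ m := by
      apply pow_lt_pow_left₀ hux (by positivity)
      omega
    have h2 : x ^ m = (l : ℝ) := by
      rw [hxdef, ← Real.rpow_natCast ((l:ℝ) ^ ((1:ℝ)/m)) m, ← Real.rpow_mul (by positivity)]
      rw [one_div, inv_mul_cancel₀ (by exact_mod_cast hm.ne')]
      simp
    rw [h2] at h1
    exact_mod_cast h1
  -- pointwise bound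
  set C : ℝ := (N : ℝ) * (2 : ℝ) ^ (-(x - 1)) with hCdef
  have hC0 : 0 ≤ C := by positivity
  have key : ∀ a : ℕ, a ∈ {a : ℕ | 1 ≤ a ∧ a ≤ N ∧ (∀ i, Nat.Coprime a (r i)) ∧
        ({b : ℕ | b ≤ N ∧ ∃ d : Fin m → ℕ, b = a * ∏ i, r i ^ d i} : Set ℕ).ncard = l} →
        (a : ℝ) ≤ C := by
    intro a ha
    obtain ⟨ha1, haN, hacop, hB⟩ := ha
    set B : Set ℕ := {b : ℕ | b ≤ N ∧ ∃ d : Fin m → ℕ, b = a * ∏ i, r i ^ d i} with hBdef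
    have hBfin : B.Finite := (Set.finite_Iic N).subset (fun b hb => hb.1)
    -- factorization recovers exponents
    have hfac : ∀ b ∈ B, b = a * ∏ i, r i ^ (b.factorization (r i)) := by
      rintro b ⟨hbN, d, rfl⟩
      congr 1
      apply Finset.prod_congr rfl
      intro j _
      congr 1
      have hprodne : (∏ i, r i ^ d i) ≠ 0 :=
        Finset.prod_ne_zero_iff.mpr (fun i _ => pow_ne_zero _ (hrprime i).pos.ne')
      rw [Nat.factorization_mul (by omega) hprodne]
      have haf : a.factorization (r j) = 0 :=
        Nat.factorization_eq_zero_of_not_dvd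
          (((hrprime j).coprime_iff_not_dvd).mp (hacop j).symm)
      rw [Finsupp.add_apply, haf, zero_add]
      rw [Nat.factorization_prod (fun i _ => pow_ne_zero _ (hrprime i).pos.ne')]
      rw [Finsupp.finset_sum_apply]
      rw [Finset.sum_eq_single_of_mem j (Finset.mem_univ j)]
      · rw [(hrprime j).factorization_pow, Finsupp.single_apply, if_pos rfl]
      · intro i _ hij
        rw [(hrprime i).factorization_pow, Finsupp.single_apply,
          if_neg (fun h => hij (hrinj h))]
    -- there is b ∈ B with some exponent ≥ u
    have hex : ∃ b ∈ B, ∃ i, u ≤ b.factorization (r i) := by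
      by_contra hcon
      push_neg at hcon
      have hcard : hBfin.toFinset.card ≤ u ^ m := by
        have := Finset.card_le_card_of_injOn
          (f := fun b => fun i : Fin m => b.factorization (r i))
          (s := hBfin.toFinset)
          (t := Fintype.piFinset (fun _ : Fin m => Finset.range u))
          (fun b hb => by
            rw [Finset.mem_coe, Fintype.mem_piFinset]
            intro i
            rw [Finset.mem_range]
            exact hcon b (hBfin.mem_toFinset.mp hb) i)
          (fun b1 hb1 b2 hb2 h => by
            rw [hfac b1 (hBfin.mem_toFinset.mp hb1), hfac b2 (hBfin.mem_toFinset.mp hb2)]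
            congr 1
            exact Finset.prod_congr rfl (fun i _ => congrArg _ (congrFun h i)))
        simpa [Fintype.card_piFinset] using this
      rw [← Set.ncard_eq_toFinset_card B hBfin] at hcard
      omega
    obtain ⟨b, hbB, i, hui⟩ := hex
    have hb2u : a * 2 ^ u ≤ b := by
      calc a * 2 ^ u ≤ a * r i ^ (b.factorization (r i)) := by
              apply Nat.mul_le_mul_left
              calc 2 ^ u ≤ 2 ^ (b.factorization (r i)) := Nat.pow_le_pow_right (by norm_num) hui
                _ ≤ r i ^ (b.factorization (r i)) :=
                    Nat.pow_le_pow_left (hrprime i).two_le _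
        _ ≤ a * ∏ j, r j ^ (b.factorization (r j)) := by
              apply Nat.mul_le_mul_left
              exact Finset.single_le_prod' (f := fun j => r j ^ (b.factorization (r j))) (fun j _ => Nat.one_le_iff_ne_zero.mpr
                (pow_ne_zero _ (hrprime j).pos.ne')) (Finset.mem_univ i)
        _ = b := (hfac b hbB).symm
    have hbN : b ≤ N := hbB.1
    have h1 : (a : ℝ) * 2 ^ (u : ℝ) ≤ (N : ℝ) := by
      rw [Real.rpow_natCast]
      exact_mod_cast le_trans hb2u hbN
    have h2 : (2:ℝ) ^ (x - 1) ≤ (2:ℝ) ^ (u:ℝ) :=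
      Real.rpow_le_rpow_of_exponent_le one_le_two huge
    have h3 : (a : ℝ) * 2 ^ (x - 1) ≤ (N : ℝ) :=
      le_trans (mul_le_mul_of_nonneg_left h2 (by positivity)) h1
    rw [hCdef, Real.rpow_neg (by norm_num), mul_comm (N:ℝ), ← div_eq_inv_mul,
      le_div_iff₀ (by positivity)]
    linarith [h3]
  -- conclude
  calc ((({a : ℕ | 1 ≤ a ∧ a ≤ N ∧ (∀ i, Nat.Coprime a (r i)) ∧
        ({b : ℕ | b ≤ N ∧ ∃ d : Fin m → ℕ, b = a * ∏ i, r i ^ d i} : Set ℕ).ncard = l} :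
          Set ℕ).ncard : ℝ))
      ≤ ((⌊C⌋₊ : ℝ)) := by
        have hsub : {a : ℕ | 1 ≤ a ∧ a ≤ N ∧ (∀ i, Nat.Coprime a (r i)) ∧
            ({b : ℕ | b ≤ N ∧ ∃ d : Fin m → ℕ, b = a * ∏ i, r i ^ d i} : Set ℕ).ncard = l}
            ⊆ (Set.Icc 1 ⌊C⌋₊) := by
          intro a ha
          exact ⟨ha.1, Nat.le_floor (key a ha)⟩
        have := Set.ncard_le_ncard hsub (Set.finite_Icc _ _)
        have hicc : (Set.Icc 1 ⌊C⌋₊).ncard = ⌊C⌋₊ := by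
          rw [← Finset.coe_Icc, Set.ncard_coe_finset, Nat.card_Icc]
          exact Nat.add_sub_cancel _ _
        rw [hicc] at this
        exact_mod_cast this
    _ ≤ C := Nat.floor_le hC0
end

section
/- With ρ_min(l) = inf{ρ ≥ 0 : |D(ρ)| = l} and ρ_max(l) = sup{ρ ≥ 0 : |D(ρ)| = l}, for every integer l ≥ 1 both quantities are well defined (the set {ρ : |D(ρ)| = l} is a nonempty interval), ρ_min(l) < ρ_max(l), and ρ_min(l) ≥ (l^{1/m} − 1)·ln 2. -/
theorem myExistsLeast (S : Set ℝ) (hfin : ∀ ρ : ℝ, (S ∩ Set.Iic ρ).Finite)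
    (hne : S.Nonempty) : ∃ a, IsLeast S a := by
  obtain ⟨t, ht⟩ := hne
  have hFne : ((hfin t).toFinset).Nonempty := by
    simp only [Set.Finite.toFinset_nonempty]
    exact ⟨t, ht, le_refl t⟩
  set a := (hfin t).toFinset.min' hFne with ha
  have haS : a ∈ S ∩ Set.Iic t := by
    have := (hfin t).toFinset.min'_mem hFne
    simpa using this
  refine ⟨a, haS.1, ?_⟩
  intro s hs
  by_cases h : s ≤ t
  · exact (hfin t).toFinset.min'_le s (by simpa using ⟨hs, h⟩)
  · exact le_trans haS.2 (le_of_not_ge h)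

theorem myMainAux (S : Set ℝ) (hS : S.Infinite) (hfin : ∀ ρ : ℝ, (S ∩ Set.Iic ρ).Finite)
    (h0 : IsLeast S 0) (k : ℕ) :
    ∃ a b : ℝ, 0 ≤ a ∧ a < b ∧
      {ρ : ℝ | 0 ≤ ρ ∧ (S ∩ Set.Iic ρ).ncard = k + 1} = Set.Ico a b := by
  have hnext : ∀ ρ : ℝ, ∃ s, IsLeast (S ∩ Set.Ioi ρ) s := by
    intro ρ
    refine myExistsLeast _ (fun ρ' => (hfin ρ').subset (by
      intro x hx; exact ⟨hx.1.1, hx.2⟩)) ?_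
    by_contra h
    rw [Set.not_nonempty_iff_eq_empty] at h
    have : S ⊆ S ∩ Set.Iic ρ := by
      intro x hx
      refine ⟨hx, ?_⟩
      by_contra hx2
      have : x ∈ S ∩ Set.Ioi ρ := ⟨hx, show ρ < x from lt_of_not_ge hx2⟩
      simp [h] at this
    exact hS ((hfin ρ).subset this)
  set v : ℕ → ℝ := fun k => Nat.rec (0 : ℝ) (fun _ prev => (hnext prev).choose) k with hv
  have hvsucc : ∀ k, IsLeast (S ∩ Set.Ioi (v k)) (v (k + 1)) :=
    fun k => (hnext (v k)).choose_spec
  have hlt : ∀ k, v k < v (k + 1) := fun k => (hvsucc k).1.2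
  have hsm : StrictMono v := strictMono_nat_of_lt_succ hlt
  have hvS : ∀ k, v k ∈ S := by
    intro k; cases k with
    | zero => exact h0.1
    | succ n => exact (hvsucc n).1.1
  have hv_nonneg : ∀ k, 0 ≤ v k := fun k => h0.2 (hvS k)
  -- the set of values up to v k
  have hIic : ∀ k, S ∩ Set.Iic (v k) = v '' Set.Iic k := by
    intro k
    induction k with
    | zero =>
      ext s
      simp only [Set.mem_inter_iff, Set.mem_Iic, Set.mem_image]
      constructor
      · rintro ⟨hsS, hs0⟩
        exact ⟨0, le_refl 0, le_antisymm (h0.2 hsS) hs0⟩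
      · rintro ⟨j, hj, rfl⟩
        have : j = 0 := Nat.le_zero.mp hj
        subst this
        exact ⟨hvS 0, le_refl _⟩
    | succ n ih =>
      ext s
      simp only [Set.mem_inter_iff, Set.mem_Iic, Set.mem_image]
      constructor
      · rintro ⟨hsS, hsle⟩
        by_cases h : s ≤ v n
        · obtain ⟨j, hj, hje⟩ := (ih ▸ (⟨hsS, h⟩ : s ∈ S ∩ Set.Iic (v n)) : s ∈ v '' Set.Iic n)
          exact ⟨j, le_trans hj (Nat.le_succ n), hje⟩
        · have : v (n + 1) ≤ s := (hvsucc n).2 ⟨hsS, lt_of_not_ge h⟩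
          exact ⟨n + 1, le_refl _, le_antisymm this hsle⟩
      · rintro ⟨j, hj, rfl⟩
        exact ⟨hvS j, hsm.monotone hj⟩
  have hcard : ∀ k, (S ∩ Set.Iic (v k)).ncard = k + 1 := by
    intro k
    rw [hIic k, Set.ncard_image_of_injective _ hsm.injective,
      ← Finset.coe_Iic, Set.ncard_coe_finset, Nat.card_Iic]
  have hconst : ∀ (j : ℕ) (ρ : ℝ), v j ≤ ρ → ρ < v (j + 1) →
      S ∩ Set.Iic ρ = S ∩ Set.Iic (v j) := by
    intro j ρ h1 h2
    ext s
    simp only [Set.mem_inter_iff, Set.mem_Iic]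
    constructor
    · rintro ⟨hsS, hs⟩
      refine ⟨hsS, ?_⟩
      by_contra h
      have : v (j + 1) ≤ s := (hvsucc j).2 ⟨hsS, lt_of_not_ge h⟩
      exact absurd (lt_of_lt_of_le h2 (le_trans this hs)) (lt_irrefl ρ)
    · rintro ⟨hsS, hs⟩
      exact ⟨hsS, le_trans hs h1⟩
  refine ⟨v k, v (k + 1), hv_nonneg k, hlt k, ?_⟩
  ext ρ
  simp only [Set.mem_setOf_eq, Set.mem_Ico]
  constructor
  · rintro ⟨hρ0, hρcard⟩
    -- there is K with ρ < v K
    have hK : ∃ K, ρ < v K := by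
      refine ⟨k + 1, ?_⟩
      by_contra h
      have hle := Set.ncard_le_ncard
        (Set.inter_subset_inter_right S (Set.Iic_subset_Iic.mpr (le_of_not_gt h)))
        (hfin ρ)
      rw [hcard (k + 1), hρcard] at hle
      omega
    set K := Nat.find hK with hKdef
    have hKpos : K ≠ 0 := by
      intro h
      have := Nat.find_spec hK
      rw [← hKdef, h] at this
      exact absurd (lt_of_le_of_lt hρ0 this) (by simp [hv])
    obtain ⟨j, hj⟩ := Nat.exists_eq_succ_of_ne_zero hKpos
    have hρltj : ρ < v (j + 1) := by
      have := Nat.find_spec hK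
      rwa [← hKdef, hj] at this
    have hvjle : v j ≤ ρ := by
      by_contra h
      have : K ≤ j := Nat.find_min' hK (lt_of_not_ge h)
      omega
    have : (S ∩ Set.Iic ρ).ncard = j + 1 := by
      rw [hconst j ρ hvjle hρltj, hcard j]
    have hjk : j = k := by omega
    subst hjk
    exact ⟨hvjle, hρltj⟩
  · rintro ⟨h1, h2⟩
    refine ⟨le_trans (hv_nonneg k) h1, ?_⟩
    rw [hconst k ρ h1 h2, hcard k]

theorem myFactEval (m : ℕ) (r : Fin m → ℕ) (hrprime : ∀ i, (r i).Prime)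
    (hrinj : Function.Injective r) (n : Fin m → ℕ) (j : Fin m) :
    (∏ i, r i ^ n i).factorization (r j) = n j := by
  rw [Nat.factorization_prod (fun i _ => pow_ne_zero _ (hrprime i).pos.ne')]
  rw [Finsupp.finset_sum_apply]
  rw [Finset.sum_eq_single j]
  · rw [(hrprime j).factorization_pow, Finsupp.single_apply]; simp
  · intro i _ hij
    rw [(hrprime i).factorization_pow, Finsupp.single_apply,
      if_neg (fun h => hij (hrinj h))]
  · simp

theorem myFInj (m : ℕ) (r : Fin m → ℕ) (hrprime : ∀ i, (r i).Prime)
    (hrinj : Function.Injective r) :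
    Function.Injective (fun n : Fin m → ℕ => ∑ i, (n i : ℝ) * Real.log (r i)) := by
  have hkey : ∀ n : Fin m → ℕ,
      ∑ i, (n i : ℝ) * Real.log (r i) = Real.log (∏ i, ((r i : ℝ)) ^ (n i)) := by
    intro n
    rw [Real.log_prod (fun i _ =>
      pow_ne_zero _ (by exact_mod_cast (hrprime i).pos.ne'))]
    simp [Real.log_pow]
  intro a b h
  simp only [hkey] at h
  have hpos : ∀ n : Fin m → ℕ, (0 : ℝ) < ∏ i, ((r i : ℝ)) ^ (n i) := by
    intro n
    apply Finset.prod_pos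
    intro i _
    exact pow_pos (by exact_mod_cast (hrprime i).pos) _
  have heq : (∏ i, ((r i : ℝ)) ^ (a i)) = ∏ i, ((r i : ℝ)) ^ (b i) := by
    have := congrArg Real.exp h
    rwa [Real.exp_log (hpos a), Real.exp_log (hpos b)] at this
  have heqn : (∏ i, r i ^ a i) = ∏ i, r i ^ b i := by
    have h2 : ((∏ i, r i ^ a i : ℕ) : ℝ) = ((∏ i, r i ^ b i : ℕ) : ℝ) := by
      push_cast; exact heq
    exact_mod_cast h2
  funext j
  have := congrArg (fun x => Nat.factorization x (r j)) heqn
  simpa [myFactEval m r hrprime hrinj] using this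

theorem myBound (m : ℕ) (r : Fin m → ℕ) (hrprime : ∀ i, (r i).Prime)
    (ρ : ℝ) (n : Fin m → ℕ) (hn : ∑ i, (n i : ℝ) * Real.log (r i) ≤ ρ) (j : Fin m) :
    (n j : ℝ) * Real.log 2 ≤ ρ := by
  have hlog2 : Real.log 2 ≤ Real.log (r j) := by
    apply Real.log_le_log (by norm_num)
    exact_mod_cast (hrprime j).two_le
  have h1 : (n j : ℝ) * Real.log (r j) ≤ ∑ i, (n i : ℝ) * Real.log (r i) := by
    apply Finset.single_le_sum (f := fun i => (n i : ℝ) * Real.log (r i)) _ (Finset.mem_univ j)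
    intro i _
    apply mul_nonneg (Nat.cast_nonneg _)
    apply Real.log_nonneg
    exact_mod_cast (hrprime i).one_lt.le
  calc (n j : ℝ) * Real.log 2 ≤ (n j : ℝ) * Real.log (r j) :=
        mul_le_mul_of_nonneg_left hlog2 (Nat.cast_nonneg _)
    _ ≤ ρ := le_trans h1 hn

theorem myFin (m : ℕ) (r : Fin m → ℕ) (hrprime : ∀ i, (r i).Prime) (ρ : ℝ) :
    ({n : Fin m → ℕ | ∑ i, (n i : ℝ) * Real.log (r i) ≤ ρ}).Finite := by
  set B := ⌊ρ / Real.log 2⌋₊ with hB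
  apply Set.Finite.subset (Set.Finite.pi (fun i : Fin m => Set.finite_Iic B))
  intro n hn
  simp only [Set.mem_pi, Set.mem_univ, Set.mem_Iic, forall_true_left]
  intro j
  have h2 : (0 : ℝ) < Real.log 2 := Real.log_pos (by norm_num)
  have := myBound m r hrprime ρ n hn j
  have hle : (n j : ℝ) ≤ ρ / Real.log 2 := (le_div_iff₀ h2).mpr this
  exact Nat.le_floor hle

theorem myCardBound (m : ℕ) (r : Fin m → ℕ) (hrprime : ∀ i, (r i).Prime)
    (a : ℝ) (ha : 0 ≤ a) :
    (({n : Fin m → ℕ | ∑ i, (n i : ℝ) * Real.log (r i) ≤ a}).ncard : ℝ)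
      ≤ (1 + a / Real.log 2) ^ m := by
  have h2 : (0 : ℝ) < Real.log 2 := Real.log_pos (by norm_num)
  set B := ⌊a / Real.log 2⌋₊ with hB
  set s := {n : Fin m → ℕ | ∑ i, (n i : ℝ) * Real.log (r i) ≤ a} with hs
  have hmemB : ∀ n ∈ s, ∀ j, n j ≤ B := by
    intro n hn j
    exact Nat.le_floor ((le_div_iff₀ h2).mpr (myBound m r hrprime a n hn j))
  have hcard : s.ncard ≤ (B + 1) ^ m := by
    rw [← Nat.card_coe_set_eq]
    let g : ↥s → (Fin m → Fin (B + 1)) := fun x i =>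
      ⟨x.1 i, Nat.lt_succ_of_le (hmemB x.1 x.2 i)⟩
    have hg : Function.Injective g := by
      intro x y hxy
      apply Subtype.ext
      funext i
      exact congrArg Fin.val (congrFun hxy i)
    calc Nat.card ↥s ≤ Nat.card (Fin m → Fin (B + 1)) :=
          Nat.card_le_card_of_injective g hg
      _ = (B + 1) ^ m := by simp [Nat.card_eq_fintype_card]
  calc (s.ncard : ℝ) ≤ (((B + 1) ^ m : ℕ) : ℝ) := by exact_mod_cast hcard
    _ = ((B : ℝ) + 1) ^ m := by push_cast; ring
    _ ≤ (1 + a / Real.log 2) ^ m := by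
        apply pow_le_pow_left₀ (by positivity)
        have : (B : ℝ) ≤ a / Real.log 2 := Nat.floor_le (by positivity)
        linarith

/-- With `|D(ρ)|` the number of tuples `n ∈ ℤ_{≥0}^m` with `∑ n_i ln r_i ≤ ρ`,
for every integer `l ≥ 1` the set `{ρ ≥ 0 : |D(ρ)| = l}` is nonempty,
`ρ_min(l) = inf < sup = ρ_max(l)`, and `ρ_min(l) ≥ (l^{1/m} - 1) ln 2`. -/
theorem stmt19 (m : ℕ) (hm : 0 < m) (r : Fin m → ℕ) (hrprime : ∀ i, (r i).Prime)
    (hrinj : Function.Injective r) (l : ℕ) (hl : 1 ≤ l) :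
    ({ρ : ℝ | 0 ≤ ρ ∧
        ({n : Fin m → ℕ | ∑ i, (n i : ℝ) * Real.log (r i) ≤ ρ} : Set (Fin m → ℕ)).ncard = l}
        : Set ℝ).Nonempty ∧
    sInf {ρ : ℝ | 0 ≤ ρ ∧
        ({n : Fin m → ℕ | ∑ i, (n i : ℝ) * Real.log (r i) ≤ ρ} : Set (Fin m → ℕ)).ncard = l}
      < sSup {ρ : ℝ | 0 ≤ ρ ∧
        ({n : Fin m → ℕ | ∑ i, (n i : ℝ) * Real.log (r i) ≤ ρ} : Set (Fin m → ℕ)).ncard = l} ∧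
    ((l : ℝ) ^ ((1 : ℝ) / m) - 1) * Real.log 2
      ≤ sInf {ρ : ℝ | 0 ≤ ρ ∧
        ({n : Fin m → ℕ | ∑ i, (n i : ℝ) * Real.log (r i) ≤ ρ} : Set (Fin m → ℕ)).ncard = l} := by
  have h2 : (0 : ℝ) < Real.log 2 := Real.log_pos (by norm_num)
  set f : (Fin m → ℕ) → ℝ := fun n => ∑ i, (n i : ℝ) * Real.log (r i) with hf
  have hfinj : Function.Injective f := myFInj m r hrprime hrinj
  set S : Set ℝ := Set.range f with hSdef
  have himg : ∀ ρ : ℝ, f '' {n | f n ≤ ρ} = S ∩ Set.Iic ρ := by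
    intro ρ
    ext y
    constructor
    · rintro ⟨n, hn, rfl⟩
      exact ⟨⟨n, rfl⟩, hn⟩
    · rintro ⟨⟨n, rfl⟩, hy⟩
      exact ⟨n, hy, rfl⟩
  have hcardeq : ∀ ρ : ℝ, ({n | f n ≤ ρ} : Set (Fin m → ℕ)).ncard = (S ∩ Set.Iic ρ).ncard := by
    intro ρ
    rw [← himg ρ, Set.ncard_image_of_injective _ hfinj]
  have hfin' : ∀ ρ : ℝ, (S ∩ Set.Iic ρ).Finite := by
    intro ρ
    rw [← himg ρ]
    exact (myFin m r hrprime ρ).image f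
  have hS : S.Infinite := by
    haveI : Nonempty (Fin m) := ⟨⟨0, hm⟩⟩
    exact Set.infinite_range_of_injective hfinj
  have h0 : IsLeast S 0 := by
    constructor
    · exact ⟨fun _ => 0, by simp [hf]⟩
    · rintro x ⟨n, rfl⟩
      apply Finset.sum_nonneg
      intro i _
      exact mul_nonneg (Nat.cast_nonneg _)
        (Real.log_nonneg (by exact_mod_cast (hrprime i).one_lt.le))
  obtain ⟨a, b, ha0, hab, hset⟩ := myMainAux S hS hfin' h0 (l - 1)
  have hll : l - 1 + 1 = l := Nat.succ_pred_eq_of_pos hl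
  rw [hll] at hset
  have hsetEq : {ρ : ℝ | 0 ≤ ρ ∧
      ({n : Fin m → ℕ | ∑ i, (n i : ℝ) * Real.log (r i) ≤ ρ} : Set (Fin m → ℕ)).ncard = l}
      = Set.Ico a b := by
    rw [← hset]
    ext ρ
    simp only [Set.mem_setOf_eq]
    rw [hcardeq ρ]
  have hamem : 0 ≤ a ∧ ({n : Fin m → ℕ | ∑ i, (n i : ℝ) * Real.log (r i) ≤ a}
      : Set (Fin m → ℕ)).ncard = l := by
    have : a ∈ Set.Ico a b := ⟨le_refl a, hab⟩
    rwa [← hsetEq] at this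
  refine ⟨?_, ?_, ?_⟩
  · rw [hsetEq]
    exact ⟨a, le_refl a, hab⟩
  · rw [hsetEq, csInf_Ico hab, csSup_Ico hab]
    exact hab
  · rw [hsetEq, csInf_Ico hab]
    have hb : (l : ℝ) ≤ (1 + a / Real.log 2) ^ m := by
      have := myCardBound m r hrprime a ha0
      rwa [hamem.2] at this
    have h1x : (0 : ℝ) ≤ 1 + a / Real.log 2 := by positivity
    have hrp : (l : ℝ) ^ ((1 : ℝ) / m) ≤ 1 + a / Real.log 2 := by
      have h := Real.rpow_le_rpow (Nat.cast_nonneg l) hb (by positivity : (0:ℝ) ≤ 1 / (m:ℝ))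
      rwa [← Real.rpow_natCast (1 + a / Real.log 2) m, ← Real.rpow_mul h1x,
        mul_one_div_cancel (by exact_mod_cast hm.ne' : (m : ℝ) ≠ 0), Real.rpow_one] at h
    have hdiv : (l : ℝ) ^ ((1 : ℝ) / m) - 1 ≤ a / Real.log 2 := by linarith
    calc ((l : ℝ) ^ ((1 : ℝ) / m) - 1) * Real.log 2
        ≤ (a / Real.log 2) * Real.log 2 := mul_le_mul_of_nonneg_right hdiv h2.le
      _ = a := div_mul_cancel₀ a h2.ne'
end
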